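/- Order the transpositions of the symmetric group S_n by: (a,b) < (c,d) (for a < b and c < d) iff a < c, or a = c and b < d. Label each cover relation u ⋖ v of the Bruhat order on S_n by the transposition v ∘ u⁻¹. Then for all u ≤ v in Bruhat order: (1) there is exactly one saturated chain from u to v whose label sequence is weakly ascending; and (2) the label sequence of this chain is lexicographically strictly smaller than the label sequence of every other saturated chain from u to v. -/

import Mathlib

/-- The number of inversions of a permutation. -/
def numInv {n : ℕ} (π : Equiv.Perm (Fin n)) : ℕ :=
  (Finset.univ.filter (fun p : Fin n × Fin n => p.1 < p.2 ∧ π p.2 < π p.1)).card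

/-- One step of the Bruhat order: left multiplication by a transposition raising `inv` by one. -/
def BruhatStep {n : ℕ} (u v : Equiv.Perm (Fin n)) : Prop :=
  (∃ a b : Fin n, a ≠ b ∧ v = Equiv.swap a b * u) ∧ numInv v = numInv u + 1

/-- The Bruhat order on `S_n`. -/
def BruhatLE {n : ℕ} : Equiv.Perm (Fin n) → Equiv.Perm (Fin n) → Prop :=
  Relation.ReflTransGen BruhatStep

/-- The covering relation of the Bruhat order. -/
def BruhatCov {n : ℕ} (u v : Equiv.Perm (Fin n)) : Prop :=
  BruhatLE u v ∧ u ≠ v ∧ ∀ z, BruhatLE u z → BruhatLE z v → z = u ∨ z = v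

/-- The order on transpositions: `(a,b) < (c,d)` (for `a < b`, `c < d`) iff `a < c`, or
`a = c` and `b < d`. -/
def transLT {n : ℕ} (t t' : Equiv.Perm (Fin n)) : Prop :=
  ∃ a b c d : Fin n, a < b ∧ c < d ∧ t = Equiv.swap a b ∧ t' = Equiv.swap c d ∧
    (a < c ∨ (a = c ∧ b < d))

def transLE {n : ℕ} (t t' : Equiv.Perm (Fin n)) : Prop := t = t' ∨ transLT t t'

/-- `c` is a saturated chain from `u` to `v` in the Bruhat order. -/
def BSatChain {n : ℕ} (c : List (Equiv.Perm (Fin n))) (u v : Equiv.Perm (Fin n)) : Prop :=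
  c.Chain' BruhatCov ∧ c.head? = some u ∧ c.getLast? = some v

/-- The label sequence of a chain: each cover `u ⋖ v` is labeled by the transposition
`v ∘ u⁻¹`. -/
def blabels {n : ℕ} (c : List (Equiv.Perm (Fin n))) : List (Equiv.Perm (Fin n)) :=
  c.zipWith (fun u v => v * u⁻¹) c.tail

theorem Equiv.Perm.apply_inv_self {α : Type*} (f : Equiv.Perm α) (x : α) : f (f⁻¹ x) = x :=
  f.apply_symm_apply x

theorem Equiv.Perm.inv_apply_self {α : Type*} (f : Equiv.Perm α) (x : α) : f⁻¹ (f x) = x :=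
  f.symm_apply_apply x

open Equiv Finset

namespace BEL

variable {n : ℕ}

/-- dominance counting function -/
def N (u : Equiv.Perm (Fin n)) (i k : ℕ) : ℕ :=
  ∑ j : Fin n, if j.1 < i ∧ k ≤ (u j).1 then 1 else 0

def rect (p q a b i k : ℕ) : ℕ := if p < i ∧ i ≤ q ∧ a < k ∧ k ≤ b then 1 else 0

lemma swap_mul_apply_inv_left (u : Equiv.Perm (Fin n)) (a b : Fin n) :
    (Equiv.swap a b * u) (u⁻¹ a) = b := by
  simp [Equiv.Perm.mul_apply]

lemma swap_mul_apply_inv_right (u : Equiv.Perm (Fin n)) (a b : Fin n) :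
    (Equiv.swap a b * u) (u⁻¹ b) = a := by
  simp [Equiv.Perm.mul_apply]

lemma swap_mul_apply_ne (u : Equiv.Perm (Fin n)) (a b : Fin n) (j : Fin n)
    (h1 : j ≠ u⁻¹ a) (h2 : j ≠ u⁻¹ b) : (Equiv.swap a b * u) j = u j := by
  have ha : u j ≠ a := fun h => h1 (by simp [← h])
  have hb : u j ≠ b := fun h => h2 (by simp [← h])
  simp [Equiv.Perm.mul_apply, Equiv.swap_apply_of_ne_of_ne ha hb]

/-- N of a swapped permutation: rectangle formula. -/
lemma N_swap (u : Equiv.Perm (Fin n)) (a b : Fin n) (hab : a < b)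
    (hpq : u⁻¹ a < u⁻¹ b) (i k : ℕ) :
    N (Equiv.swap a b * u) i k = N u i k + rect (u⁻¹ a).1 (u⁻¹ b).1 a.1 b.1 i k := by
  classical
  set p := u⁻¹ a with hp
  set q := u⁻¹ b with hq
  have hpqne : p ≠ q := ne_of_lt hpq
  have hqmem : q ∈ (univ : Finset (Fin n)).erase p := by
    simp [Finset.mem_erase, hpqne.symm]
  have key : ∀ (w : Equiv.Perm (Fin n)),
      N w i k = (if p.1 < i ∧ k ≤ (w p).1 then 1 else 0) +
        ((if q.1 < i ∧ k ≤ (w q).1 then 1 else 0) +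
        ∑ j ∈ ((univ : Finset (Fin n)).erase p).erase q,
          (if j.1 < i ∧ k ≤ (w j).1 then 1 else 0)) := by
    intro w
    rw [N, ← Finset.add_sum_erase _ _ (Finset.mem_univ p),
      ← Finset.add_sum_erase _ _ hqmem]
  rw [key (Equiv.swap a b * u), key u]
  have hsum : ∑ j ∈ ((univ : Finset (Fin n)).erase p).erase q,
      (if j.1 < i ∧ k ≤ ((Equiv.swap a b * u) j).1 then 1 else 0) =
      ∑ j ∈ ((univ : Finset (Fin n)).erase p).erase q,
      (if j.1 < i ∧ k ≤ (u j).1 then 1 else 0) := by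
    apply Finset.sum_congr rfl
    intro j hj
    simp only [Finset.mem_erase] at hj
    rw [swap_mul_apply_ne u a b j hj.2.1 hj.1]
  rw [hsum, swap_mul_apply_inv_left, swap_mul_apply_inv_right]
  have hup : u p = a := by simp [hp]
  have huq : u q = b := by simp [hq]
  rw [hup, huq]
  have hab' : a.1 < b.1 := hab
  have hpq' : p.1 < q.1 := hpq
  simp only [rect]
  split_ifs <;> omega

/-- splitting N by a value threshold -/
lemma N_split (u : Equiv.Perm (Fin n)) (i : ℕ) {k k' : ℕ} (h : k ≤ k') :
    N u i k = N u i k' +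
      ∑ j : Fin n, (if j.1 < i ∧ k ≤ (u j).1 ∧ (u j).1 < k' then 1 else 0) := by
  rw [N, N, ← Finset.sum_add_distrib]
  apply Finset.sum_congr rfl
  intro j _
  split_ifs <;> omega

lemma numInv_eq_sum_N (u : Equiv.Perm (Fin n)) :
    numInv u = ∑ i : Fin n, N u i.1 ((u i).1 + 1) := by
  classical
  rw [numInv, Finset.card_filter]
  rw [← Finset.univ_product_univ, Finset.sum_product]
  rw [Finset.sum_comm]
  apply Finset.sum_congr rfl
  intro i _
  rw [N]
  apply Finset.sum_congr rfl
  intro j _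
  refine if_congr ?_ rfl rfl
  simp only [Fin.lt_def]
  omega

/-- number of intermediate witnesses for the swap `(a,b)` on `u` -/
def mid (u : Equiv.Perm (Fin n)) (a b : Fin n) : ℕ :=
  ∑ j : Fin n, if (u⁻¹ a).1 < j.1 ∧ j.1 < (u⁻¹ b).1 ∧ a.1 < (u j).1 ∧ (u j).1 < b.1
    then 1 else 0

lemma val_eq_iff_pos (u : Equiv.Perm (Fin n)) (a j : Fin n) :
    u j = a ↔ j = u⁻¹ a := by
  constructor
  · intro h; simp [← h]
  · intro h; simp [h]

lemma numInv_swap (u : Equiv.Perm (Fin n)) (a b : Fin n) (hab : a < b)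
    (hpq : u⁻¹ a < u⁻¹ b) :
    numInv (Equiv.swap a b * u) = numInv u + 1 + 2 * mid u a b := by
  classical
  set z := Equiv.swap a b * u with hz
  set p := u⁻¹ a with hp
  set q := u⁻¹ b with hq
  have hup : u p = a := by simp [hp]
  have huq : u q = b := by simp [hq]
  have hzp : z p = b := swap_mul_apply_inv_left u a b
  have hzq : z q = a := swap_mul_apply_inv_right u a b
  have hpqne : p ≠ q := ne_of_lt hpq
  have hqmem : q ∈ (univ : Finset (Fin n)).erase p := by
    simp [Finset.mem_erase, hpqne.symm]
  have hab' : a.1 < b.1 := hab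
  have hpq' : p.1 < q.1 := hpq
  have key : ∀ (w : Equiv.Perm (Fin n)),
      numInv w = N w p.1 ((w p).1 + 1) + (N w q.1 ((w q).1 + 1) +
        ∑ i ∈ ((univ : Finset (Fin n)).erase p).erase q, N w i.1 ((w i).1 + 1)) := by
    intro w
    rw [numInv_eq_sum_N, ← Finset.add_sum_erase _ _ (Finset.mem_univ p),
      ← Finset.add_sum_erase _ _ hqmem]
  rw [key z, key u, hzp, hzq, hup, huq]
  -- rest sum for z
  have hrest : ∑ i ∈ ((univ : Finset (Fin n)).erase p).erase q, N z i.1 ((z i).1 + 1) =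
      (∑ i ∈ ((univ : Finset (Fin n)).erase p).erase q, N u i.1 ((u i).1 + 1)) +
        mid u a b := by
    have hmid : mid u a b = ∑ i ∈ ((univ : Finset (Fin n)).erase p).erase q,
        rect p.1 q.1 a.1 b.1 i.1 ((u i).1 + 1) := by
      rw [mid]
      rw [← Finset.add_sum_erase _ (fun j : Fin n => if p.1 < j.1 ∧ j.1 < q.1 ∧ a.1 < (u j).1 ∧ (u j).1 < b.1 then 1 else 0) (Finset.mem_univ p),
        ← Finset.add_sum_erase _ _ hqmem]
      have e1 : (if p.1 < p.1 ∧ p.1 < q.1 ∧ a.1 < (u p).1 ∧ (u p).1 < b.1 then 1 else 0) = 0 := by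
        simp
      have e2 : (if p.1 < q.1 ∧ q.1 < q.1 ∧ a.1 < (u q).1 ∧ (u q).1 < b.1 then 1 else 0) = 0 := by
        simp
      rw [e1, e2]
      simp only [Nat.zero_add]
      apply Finset.sum_congr rfl
      intro i hi
      simp only [Finset.mem_erase] at hi
      have hia : (u i).1 ≠ a.1 := by
        intro h
        exact hi.2.1 ((val_eq_iff_pos u a i).1 (Fin.val_injective h))
      have hib : (u i).1 ≠ b.1 := by
        intro h
        exact hi.1 ((val_eq_iff_pos u b i).1 (Fin.val_injective h))
      have hiq : i.1 ≠ q.1 := fun h => hi.1 (Fin.val_injective h)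
      rw [rect]
      split_ifs <;> omega
    rw [hmid, ← Finset.sum_add_distrib]
    apply Finset.sum_congr rfl
    intro i hi
    simp only [Finset.mem_erase] at hi
    have hzi : z i = u i := swap_mul_apply_ne u a b i hi.2.1 hi.1
    rw [hzi, N_swap u a b hab hpq]
  rw [hrest]
  -- endpoint terms
  have ep1 : N z p.1 (b.1 + 1) = N u p.1 (b.1 + 1) := by
    rw [N_swap u a b hab hpq, rect]
    simp
  have ep2 : N z q.1 (a.1 + 1) = N u q.1 (a.1 + 1) + 1 := by
    rw [N_swap u a b hab hpq, rect]
    have : p.1 < q.1 ∧ q.1 ≤ q.1 ∧ a.1 < a.1 + 1 ∧ a.1 + 1 ≤ b.1 := by omega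
    rw [if_pos this]
  rw [ep1, ep2]
  -- column splits
  have c1 : N u p.1 (a.1 + 1) = N u p.1 (b.1 + 1) +
      ∑ j : Fin n, (if j.1 < p.1 ∧ a.1 + 1 ≤ (u j).1 ∧ (u j).1 < b.1 + 1 then 1 else 0) :=
    N_split u p.1 (by omega)
  have c2 : N u q.1 (a.1 + 1) = N u q.1 (b.1 + 1) +
      ∑ j : Fin n, (if j.1 < q.1 ∧ a.1 + 1 ≤ (u j).1 ∧ (u j).1 < b.1 + 1 then 1 else 0) :=
    N_split u q.1 (by omega)
  have c3 : ∑ j : Fin n, (if j.1 < q.1 ∧ a.1 + 1 ≤ (u j).1 ∧ (u j).1 < b.1 + 1 then 1 else 0) =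
      (∑ j : Fin n, (if j.1 < p.1 ∧ a.1 + 1 ≤ (u j).1 ∧ (u j).1 < b.1 + 1 then 1 else 0)) +
      mid u a b := by
    rw [mid, ← Finset.sum_add_distrib]
    apply Finset.sum_congr rfl
    intro j _
    rcases eq_or_ne j p with rfl | hjp
    · rw [hup]; split_ifs <;> omega
    · rcases eq_or_ne j q with rfl | hjq
      · rw [huq]; split_ifs <;> omega
      · have hja : (u j).1 ≠ a.1 := by
          intro h
          exact hjp ((val_eq_iff_pos u a j).1 (Fin.val_injective h))
        have hjb : (u j).1 ≠ b.1 := by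
          intro h
          exact hjq ((val_eq_iff_pos u b j).1 (Fin.val_injective h))
        split_ifs <;> omega
  omega

lemma mid_pos_witness (u : Equiv.Perm (Fin n)) (a b : Fin n) (h : mid u a b ≠ 0) :
    ∃ r : Fin n, (u⁻¹ a).1 < r.1 ∧ r.1 < (u⁻¹ b).1 ∧ a.1 < (u r).1 ∧ (u r).1 < b.1 := by
  by_contra hc
  push_neg at hc
  apply h
  rw [mid]
  apply Finset.sum_eq_zero
  intro j _
  rw [if_neg]
  intro ⟨h1, h2, h3, h4⟩
  exact absurd h4 (not_lt.2 (hc j h1 h2 h3))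

lemma step_of_mid_zero (u : Equiv.Perm (Fin n)) (a b : Fin n) (hab : a < b)
    (hpq : u⁻¹ a < u⁻¹ b) (hm : mid u a b = 0) :
    BruhatStep u (Equiv.swap a b * u) := by
  refine ⟨⟨a, b, ne_of_lt hab, rfl⟩, ?_⟩
  rw [numInv_swap u a b hab hpq, hm]

lemma mid_erase_le (u w : Equiv.Perm (Fin n)) (a b c d : Fin n) (r : Fin n)
    (hr1 : (u⁻¹ a).1 < r.1) (hr2 : r.1 < (u⁻¹ b).1) (hr3 : a.1 < (u r).1)
    (hr4 : (u r).1 < b.1)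
    (himp : ∀ j : Fin n, j ≠ r →
      ((w⁻¹ c).1 < j.1 ∧ j.1 < (w⁻¹ d).1 ∧ c.1 < (w j).1 ∧ (w j).1 < d.1) →
      ((u⁻¹ a).1 < j.1 ∧ j.1 < (u⁻¹ b).1 ∧ a.1 < (u j).1 ∧ (u j).1 < b.1))
    (hrw : ¬ ((w⁻¹ c).1 < r.1 ∧ r.1 < (w⁻¹ d).1 ∧ c.1 < (w r).1 ∧ (w r).1 < d.1)) :
    mid w c d + 1 ≤ mid u a b := by
  rw [mid, mid]
  rw [← Finset.add_sum_erase _ (fun j : Fin n => if (u⁻¹ a).1 < j.1 ∧ j.1 < (u⁻¹ b).1 ∧ a.1 < (u j).1 ∧ (u j).1 < b.1 then 1 else 0) (Finset.mem_univ r),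
    ← Finset.add_sum_erase _ (fun j : Fin n => if (w⁻¹ c).1 < j.1 ∧ j.1 < (w⁻¹ d).1 ∧ c.1 < (w j).1 ∧ (w j).1 < d.1 then 1 else 0) (Finset.mem_univ r)]
  rw [if_neg hrw, if_pos ⟨hr1, hr2, hr3, hr4⟩]
  have : ∑ j ∈ (univ : Finset (Fin n)).erase r,
      (if (w⁻¹ c).1 < j.1 ∧ j.1 < (w⁻¹ d).1 ∧ c.1 < (w j).1 ∧ (w j).1 < d.1 then 1 else 0) ≤
      ∑ j ∈ (univ : Finset (Fin n)).erase r,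
      (if (u⁻¹ a).1 < j.1 ∧ j.1 < (u⁻¹ b).1 ∧ a.1 < (u j).1 ∧ (u j).1 < b.1 then 1 else 0) := by
    apply Finset.sum_le_sum
    intro j hj
    simp only [Finset.mem_erase] at hj
    by_cases hcnd : (w⁻¹ c).1 < j.1 ∧ j.1 < (w⁻¹ d).1 ∧ c.1 < (w j).1 ∧ (w j).1 < d.1
    · rw [if_pos hcnd, if_pos (himp j hj.1 hcnd)]
    · rw [if_neg hcnd]
      split_ifs <;> omega
  omega

lemma swap_triple (a b c : Fin n) (hab : a ≠ b) (hac : a ≠ c) (hcb : c ≠ b) :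
    Equiv.swap a c * Equiv.swap a b * Equiv.swap c b = Equiv.swap a b := by
  ext x
  simp only [Equiv.Perm.mul_apply, Equiv.swap_apply_def]
  split_ifs <;> simp_all

lemma inv_swap_apply (u : Equiv.Perm (Fin n)) (a b c : Fin n) :
    (Equiv.swap a b * u)⁻¹ c = u⁻¹ (Equiv.swap a b c) := by
  rw [mul_inv_rev, Equiv.Perm.mul_apply, Equiv.swap_inv]

lemma inv_swap_left (u : Equiv.Perm (Fin n)) (a b : Fin n) :
    (Equiv.swap a b * u)⁻¹ a = u⁻¹ b := by
  rw [inv_swap_apply, Equiv.swap_apply_left]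

lemma inv_swap_right (u : Equiv.Perm (Fin n)) (a b : Fin n) :
    (Equiv.swap a b * u)⁻¹ b = u⁻¹ a := by
  rw [inv_swap_apply, Equiv.swap_apply_right]

lemma inv_swap_ne (u : Equiv.Perm (Fin n)) (a b c : Fin n) (h1 : c ≠ a) (h2 : c ≠ b) :
    (Equiv.swap a b * u)⁻¹ c = u⁻¹ c := by
  rw [inv_swap_apply, Equiv.swap_apply_of_ne_of_ne h1 h2]

lemma bruhatLE_swap_aux : ∀ (m : ℕ) (u : Equiv.Perm (Fin n)) (a b : Fin n), a < b →
    u⁻¹ a < u⁻¹ b → mid u a b ≤ m → BruhatLE u (Equiv.swap a b * u) := by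
  intro m
  induction m with
  | zero =>
    intro u a b hab hpq hm
    exact Relation.ReflTransGen.single (step_of_mid_zero u a b hab hpq (Nat.le_zero.1 hm))
  | succ m ih =>
    intro u a b hab hpq hm
    by_cases hm0 : mid u a b = 0
    · exact Relation.ReflTransGen.single (step_of_mid_zero u a b hab hpq hm0)
    obtain ⟨r, hr1, hr2, hr3, hr4⟩ := mid_pos_witness u a b hm0
    set p := u⁻¹ a with hpdef
    set q := u⁻¹ b with hqdef
    set c := u r with hcdef
    have hur : u⁻¹ c = r := by simp [hcdef]
    have hab' : a.1 < b.1 := hab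
    have hpq' : p.1 < q.1 := hpq
    have hca : c ≠ a := by
      intro h; rw [h] at hur; rw [← hpdef] at hur; omega
    have hcb : c ≠ b := by
      intro h; rw [h] at hur; rw [← hqdef] at hur; omega
    have hac' : a.1 < c.1 := hr3
    have hcb' : c.1 < b.1 := hr4
    -- step 1 : u → u1 = swap c b * u
    set u1 := Equiv.swap c b * u with hu1
    have s1 : BruhatLE u u1 := by
      apply ih u c b (by exact hcb') (by rw [hur, ← hqdef]; exact Fin.mk_lt_mk.mpr hr2)
      have := mid_erase_le u u a b c b r hr1 hr2 hr3 hr4 ?_ ?_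
      · omega
      · intro j _ hcnd
        rw [hur] at hcnd
        rw [← hqdef] at hcnd
        exact ⟨by omega, hcnd.2.1, by omega, hcnd.2.2.2⟩
      · rw [hur]; omega
    -- positions in u1
    have h1a : u1⁻¹ a = p := by rw [hu1, inv_swap_ne u c b a hca.symm (ne_of_lt hab)]
    have h1b : u1⁻¹ b = r := by rw [hu1, inv_swap_right, hur]
    have h1c : u1⁻¹ c = q := by rw [hu1, inv_swap_left]
    have hu1j : ∀ j : Fin n, j ≠ r → j ≠ q → u1 j = u j := by
      intro j hjr hjq
      rw [hu1]
      exact swap_mul_apply_ne u c b j (by rw [hur]; exact hjr) hjq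
    -- step 2 : u1 → u2 = swap a b * u1
    set u2 := Equiv.swap a b * u1 with hu2
    have s2 : BruhatLE u1 u2 := by
      apply ih u1 a b hab (by rw [h1a, h1b]; exact Fin.mk_lt_mk.mpr hr1)
      have := mid_erase_le u u1 a b a b r hr1 hr2 hr3 hr4 ?_ ?_
      · omega
      · intro j hjr hcnd
        rw [h1a, h1b] at hcnd
        have hjq : j ≠ q := by
          intro h; subst h; omega
        rw [hu1j j hjr hjq] at hcnd
        exact ⟨hcnd.1, by omega, hcnd.2.2⟩
      · rw [h1a, h1b]; omega
    -- positions in u2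
    have h2a : u2⁻¹ a = r := by rw [hu2, inv_swap_left, h1b]
    have h2c : u2⁻¹ c = q := by rw [hu2, inv_swap_ne u1 a b c hca (by exact hcb), h1c]
    have hu2j : ∀ j : Fin n, j ≠ p → j ≠ r → j ≠ q → u2 j = u j := by
      intro j hjp hjr hjq
      rw [hu2, swap_mul_apply_ne u1 a b j (by rw [h1a]; exact hjp) (by rw [h1b]; exact hjr),
        hu1j j hjr hjq]
    -- step 3 : u2 → u3 = swap a c * u2
    have s3 : BruhatLE u2 (Equiv.swap a c * u2) := by
      apply ih u2 a c (by exact hac') (by rw [h2a, h2c]; exact Fin.mk_lt_mk.mpr hr2)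
      have := mid_erase_le u u2 a b a c r hr1 hr2 hr3 hr4 ?_ ?_
      · omega
      · intro j hjr hcnd
        rw [h2a, h2c] at hcnd
        have hjp : j ≠ p := by intro h; subst h; omega
        have hjq : j ≠ q := by intro h; subst h; omega
        rw [hu2j j hjp hjr hjq] at hcnd
        exact ⟨by omega, by omega, hcnd.2.2.1, by omega⟩
      · rw [h2a, h2c]; omega
    have : Equiv.swap a c * u2 = Equiv.swap a b * u := by
      rw [hu2, hu1, ← mul_assoc, ← mul_assoc,
        swap_triple a b c (ne_of_lt hab) (Fin.ne_of_val_ne (by omega)) hcb]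
    rw [this] at s3
    exact (s1.trans s2).trans s3

lemma bruhatLE_swap (u : Equiv.Perm (Fin n)) (a b : Fin n) (hab : a < b)
    (hpq : u⁻¹ a < u⁻¹ b) : BruhatLE u (Equiv.swap a b * u) :=
  bruhatLE_swap_aux (mid u a b) u a b hab hpq le_rfl

lemma numInv_le_of_le {u v : Equiv.Perm (Fin n)} (h : BruhatLE u v) :
    numInv u ≤ numInv v := by
  induction h with
  | refl => exact le_rfl
  | tail _ h2 ih =>
    have := h2.2
    omega

lemma eq_of_le_of_numInv_le {u v : Equiv.Perm (Fin n)} (h : BruhatLE u v)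
    (h2 : numInv v ≤ numInv u) : u = v := by
  rcases Relation.ReflTransGen.cases_head h with rfl | ⟨z, hz, hzv⟩
  · rfl
  · have := numInv_le_of_le hzv
    have := hz.2
    omega

lemma step_char {u z : Equiv.Perm (Fin n)} :
    BruhatStep u z ↔ ∃ a b : Fin n, a < b ∧ u⁻¹ a < u⁻¹ b ∧ mid u a b = 0 ∧
      z = Equiv.swap a b * u := by
  constructor
  · rintro ⟨⟨a, b, hne, rfl⟩, hnum⟩
    -- normalize to a < b
    have main : ∀ a b : Fin n, a < b →
        numInv (Equiv.swap a b * u) = numInv u + 1 →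
        ∃ a' b' : Fin n, a' < b' ∧ u⁻¹ a' < u⁻¹ b' ∧ mid u a' b' = 0 ∧
          Equiv.swap a b * u = Equiv.swap a' b' * u := by
      intro a b hab hnum
      rcases lt_trichotomy (u⁻¹ a) (u⁻¹ b) with hpq | hpq | hpq
      · have := numInv_swap u a b hab hpq
        exact ⟨a, b, hab, hpq, by omega, rfl⟩
      · exact absurd (u⁻¹.injective hpq) (ne_of_lt hab)
      · exfalso
        have hza : (Equiv.swap a b * u)⁻¹ a = u⁻¹ b := inv_swap_left u a b
        have hzb : (Equiv.swap a b * u)⁻¹ b = u⁻¹ a := inv_swap_right u a b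
        have hlt : (Equiv.swap a b * u)⁻¹ a < (Equiv.swap a b * u)⁻¹ b := by
          rw [hza, hzb]; exact hpq
        have h2 := numInv_swap (Equiv.swap a b * u) a b hab hlt
        rw [← mul_assoc, Equiv.swap_mul_self, one_mul] at h2
        omega
    rcases lt_or_gt_of_ne hne with hab | hab
    · exact main a b hab hnum
    · rw [Equiv.swap_comm] at hnum ⊢
      exact main b a hab hnum
  · rintro ⟨a, b, hab, hpq, hm, rfl⟩
    exact step_of_mid_zero u a b hab hpq hm

lemma N_le_of_step {u z : Equiv.Perm (Fin n)} (h : BruhatStep u z) (i k : ℕ) :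
    N u i k ≤ N z i k := by
  obtain ⟨a, b, hab, hpq, _, rfl⟩ := step_char.1 h
  rw [N_swap u a b hab hpq]
  omega

lemma N_le_of_le {u v : Equiv.Perm (Fin n)} (h : BruhatLE u v) (i k : ℕ) :
    N u i k ≤ N v i k := by
  induction h with
  | refl => exact le_rfl
  | tail _ h2 ih => exact le_trans ih (N_le_of_step h2 i k)

lemma N_succ (u : Equiv.Perm (Fin n)) (i : Fin n) (k : ℕ) :
    N u (i.1 + 1) k = N u i.1 k + (if k ≤ (u i).1 then 1 else 0) := by
  classical
  rw [N, N]
  rw [← Finset.add_sum_erase _ (fun j : Fin n => if j.1 < i.1 + 1 ∧ k ≤ (u j).1 then 1 else 0)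
    (Finset.mem_univ i),
    ← Finset.add_sum_erase _ (fun j : Fin n => if j.1 < i.1 ∧ k ≤ (u j).1 then 1 else 0)
    (Finset.mem_univ i)]
  have h2 : ∑ j ∈ (univ : Finset (Fin n)).erase i,
      (if j.1 < i.1 + 1 ∧ k ≤ (u j).1 then 1 else 0) =
      ∑ j ∈ (univ : Finset (Fin n)).erase i,
      (if j.1 < i.1 ∧ k ≤ (u j).1 then 1 else 0) := by
    apply Finset.sum_congr rfl
    intro j hj
    simp only [Finset.mem_erase] at hj
    have : j.1 ≠ i.1 := fun h => hj.1 (Fin.val_injective h)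
    split_ifs <;> omega
  rw [h2]
  split_ifs <;> omega

lemma N_prefix_eq {u v : Equiv.Perm (Fin n)} {m : ℕ}
    (h : ∀ j : Fin n, j.1 < m → u j = v j) (k : ℕ) : N u m k = N v m k := by
  rw [N, N]
  apply Finset.sum_congr rfl
  intro j _
  by_cases hj : j.1 < m
  · rw [h j hj]
  · rw [if_neg (fun hc => hj hc.1), if_neg (fun hc => hj hc.1)]

lemma N_pos_split (u : Equiv.Perm (Fin n)) {i' i : ℕ} (h : i' ≤ i) (k : ℕ) :
    N u i k = N u i' k + ∑ j : Fin n,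
      (if i' ≤ j.1 ∧ j.1 < i ∧ k ≤ (u j).1 then 1 else 0) := by
  rw [N, N, ← Finset.sum_add_distrib]
  apply Finset.sum_congr rfl
  intro j _
  split_ifs <;> omega

lemma rect_dom_aux (u v : Equiv.Perm (Fin n)) (i0 q : Fin n)
    (hdom : ∀ i k, N u i k ≤ N v i k)
    (hNpre : ∀ k, N u i0.1 k = N v i0.1 k)
    (hval : (u i0).1 < (v i0).1)
    (hi0q : i0.1 < q.1)
    (hab : (u i0).1 < (u q).1) (hbV : (u q).1 ≤ (v i0).1)
    (hqmin : ∀ j : Fin n, i0.1 < j.1 → (u i0).1 < (u j).1 → (u j).1 ≤ (v i0).1 →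
      q.1 ≤ j.1) :
    ∀ i k, N u i k + rect i0.1 q.1 (u i0).1 (u q).1 i k ≤ N v i k := by
  intro i k
  rw [rect]
  split_ifs with hr
  · obtain ⟨hr1, hr2, hr3, hr4⟩ := hr
    have e1 := N_pos_split u (show i0.1 ≤ i by omega) k
    have e2 := N_pos_split v (show i0.1 ≤ i by omega) k
    have e1' := N_pos_split u (show i0.1 ≤ i by omega) ((v i0).1 + 1)
    have e2' := N_pos_split v (show i0.1 ≤ i by omega) ((v i0).1 + 1)
    have hdomV := hdom i ((v i0).1 + 1)
    have hNpreV := hNpre ((v i0).1 + 1)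
    have hNprek := hNpre k
    have e3 : ∑ j : Fin n, (if i0.1 ≤ j.1 ∧ j.1 < i ∧ k ≤ (u j).1 then 1 else 0) =
        ∑ j : Fin n, (if i0.1 ≤ j.1 ∧ j.1 < i ∧ (v i0).1 + 1 ≤ (u j).1 then 1 else 0) := by
      apply Finset.sum_congr rfl
      intro j _
      by_cases h1 : i0.1 ≤ j.1 ∧ j.1 < i
      · by_cases h2 : j.1 = i0.1
        · have hji : j = i0 := Fin.val_injective h2
          subst hji
          rw [if_neg (by omega), if_neg (by omega)]
        · by_cases h3 : (v i0).1 + 1 ≤ (u j).1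
          · rw [if_pos ⟨h1.1, h1.2, by omega⟩, if_pos ⟨h1.1, h1.2, h3⟩]
          · have hnk : ¬ (i0.1 ≤ j.1 ∧ j.1 < i ∧ k ≤ (u j).1) := by
              rintro ⟨-, hji, hkj⟩
              have := hqmin j (by omega) (by omega) (by omega)
              omega
            rw [if_neg hnk, if_neg (fun hc => h3 hc.2.2)]
      · rw [if_neg (fun hc => h1 ⟨hc.1, hc.2.1⟩), if_neg (fun hc => h1 ⟨hc.1, hc.2.1⟩)]
    have e4 : ∑ j : Fin n, (if i0.1 ≤ j.1 ∧ j.1 < i ∧ (v i0).1 + 1 ≤ (v j).1 then 1 else 0)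
        + 1 ≤ ∑ j : Fin n, (if i0.1 ≤ j.1 ∧ j.1 < i ∧ k ≤ (v j).1 then 1 else 0) := by
      rw [← Finset.add_sum_erase _ (fun j : Fin n =>
          if i0.1 ≤ j.1 ∧ j.1 < i ∧ k ≤ (v j).1 then 1 else 0) (Finset.mem_univ i0),
        ← Finset.add_sum_erase _ (fun j : Fin n =>
          if i0.1 ≤ j.1 ∧ j.1 < i ∧ (v i0).1 + 1 ≤ (v j).1 then 1 else 0) (Finset.mem_univ i0)]
      rw [if_neg (by omega), if_pos ⟨le_rfl, hr1, by omega⟩]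
      have : ∑ j ∈ (univ : Finset (Fin n)).erase i0,
          (if i0.1 ≤ j.1 ∧ j.1 < i ∧ (v i0).1 + 1 ≤ (v j).1 then 1 else 0) ≤
          ∑ j ∈ (univ : Finset (Fin n)).erase i0,
          (if i0.1 ≤ j.1 ∧ j.1 < i ∧ k ≤ (v j).1 then 1 else 0) := by
        apply Finset.sum_le_sum
        intro j _
        split_ifs <;> omega
      omega
    omega
  · have := hdom i k
    omega

lemma exists_step_of_N_lt (u v : Equiv.Perm (Fin n))
    (hdom : ∀ i k, N u i k ≤ N v i k) (hne : u ≠ v) :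
    ∃ z, BruhatLE u z ∧ (∀ i k, N z i k ≤ N v i k) ∧
      ∃ i k, i < n + 1 ∧ k < n + 1 ∧ N u i k < N z i k := by
  classical
  have hS : ((univ : Finset (Fin n)).filter (fun i => u i ≠ v i)).Nonempty := by
    by_contra hc
    exact hne (Equiv.ext (fun i => by
      by_contra hci
      exact hc ⟨i, Finset.mem_filter.mpr ⟨Finset.mem_univ i, hci⟩⟩))
  obtain ⟨i0, hi0S, hi0min⟩ : ∃ i0, i0 ∈ ((univ : Finset (Fin n)).filter
        (fun i => u i ≠ v i)) ∧
      ∀ j ∈ ((univ : Finset (Fin n)).filter (fun i => u i ≠ v i)), i0 ≤ j :=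
    ⟨_, Finset.min'_mem _ hS, fun j hj => Finset.min'_le _ j hj⟩
  have hi0ne : u i0 ≠ v i0 := (Finset.mem_filter.1 hi0S).2
  have hprefix : ∀ j : Fin n, j.1 < i0.1 → u j = v j := by
    intro j hj
    by_contra hc
    have h2 := hi0min j (Finset.mem_filter.mpr ⟨Finset.mem_univ j, hc⟩)
    have : i0.1 ≤ j.1 := h2
    omega
  have hNpre : ∀ k, N u i0.1 k = N v i0.1 k := fun k => N_prefix_eq hprefix k
  have hval : (u i0).1 < (v i0).1 := by
    have h1 := hdom (i0.1 + 1) ((u i0).1)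
    rw [N_succ, N_succ, hNpre] at h1
    have h2 : (u i0).1 ≤ (u i0).1 := le_rfl
    rw [if_pos h2] at h1
    have h3 : (u i0).1 ≤ (v i0).1 := by
      by_contra hc
      rw [if_neg (fun h : (u i0).1 ≤ (v i0).1 => hc h)] at h1
      omega
    have hvne : (u i0).1 ≠ (v i0).1 := fun h => hi0ne (Fin.val_injective h)
    omega
  have hCne : ((univ : Finset (Fin n)).filter
      (fun j => i0.1 < j.1 ∧ (u i0).1 < (u j).1 ∧ (u j).1 ≤ (v i0).1)).Nonempty := by
    refine ⟨u⁻¹ (v i0), Finset.mem_filter.mpr ⟨Finset.mem_univ _, ?_, ?_, ?_⟩⟩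
    · have h1 : u (u⁻¹ (v i0)) = v i0 := Equiv.Perm.apply_inv_self u (v i0)
      have h2 : u⁻¹ (v i0) ≠ i0 := by
        intro h
        rw [h] at h1
        exact hi0ne h1
      have h3 : ¬ (u⁻¹ (v i0)).1 < i0.1 := by
        intro h
        have h4 := hprefix _ h
        rw [h1] at h4
        exact h2 (v.injective h4.symm)
      have h4 : (u⁻¹ (v i0)).1 ≠ i0.1 := fun h => h2 (Fin.val_injective h)
      omega
    · rw [Equiv.Perm.apply_inv_self]; exact hval
    · rw [Equiv.Perm.apply_inv_self]
  obtain ⟨q, hqS, hqmin'⟩ : ∃ q, q ∈ ((univ : Finset (Fin n)).filter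
        (fun j => i0.1 < j.1 ∧ (u i0).1 < (u j).1 ∧ (u j).1 ≤ (v i0).1)) ∧
      ∀ j ∈ ((univ : Finset (Fin n)).filter
        (fun j => i0.1 < j.1 ∧ (u i0).1 < (u j).1 ∧ (u j).1 ≤ (v i0).1)), q ≤ j :=
    ⟨_, Finset.min'_mem _ hCne, fun j hj => Finset.min'_le _ j hj⟩
  obtain ⟨-, hi0q, hab, hbV⟩ := Finset.mem_filter.1 hqS
  have hqmin : ∀ j : Fin n, i0.1 < j.1 → (u i0).1 < (u j).1 → (u j).1 ≤ (v i0).1 →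
      q.1 ≤ j.1 := by
    intro j h1 h2 h3
    exact hqmin' j (Finset.mem_filter.mpr ⟨Finset.mem_univ j, h1, h2, h3⟩)
  have claim2 := rect_dom_aux u v i0 q hdom hNpre hval hi0q hab hbV hqmin
  have hua : u⁻¹ (u i0) = i0 := Equiv.Perm.inv_apply_self u i0
  have hub : u⁻¹ (u q) = q := Equiv.Perm.inv_apply_self u q
  have habf : u i0 < u q := Fin.mk_lt_mk.mpr hab
  have hpqf : u⁻¹ (u i0) < u⁻¹ (u q) := by rw [hua, hub]; exact Fin.mk_lt_mk.mpr hi0q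
  refine ⟨Equiv.swap (u i0) (u q) * u, ?_, ?_, ?_⟩
  · exact bruhatLE_swap u (u i0) (u q) habf hpqf
  · intro i k
    rw [N_swap u (u i0) (u q) habf hpqf, hua, hub]
    exact claim2 i k
  · refine ⟨i0.1 + 1, (u i0).1 + 1, by omega, by omega, ?_⟩
    rw [N_swap u (u i0) (u q) habf hpqf, hua, hub, rect]
    rw [if_pos ⟨by omega, by omega, by omega, by omega⟩]
    omega

lemma le_of_N_le : ∀ (m : ℕ) (u v : Equiv.Perm (Fin n)),
    (∀ i k, N u i k ≤ N v i k) →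
    (∑ p ∈ Finset.range (n+1) ×ˢ Finset.range (n+1), (N v p.1 p.2 - N u p.1 p.2)) ≤ m →
    BruhatLE u v := by
  intro m
  induction m with
  | zero =>
    intro u v hdom hphi
    by_cases hne : u = v
    · exact hne ▸ Relation.ReflTransGen.refl
    · exfalso
      obtain ⟨z, _, hzv, i, k, hi, hk, hlt⟩ := exists_step_of_N_lt u v hdom hne
      have h1 : N u i k < N v i k := lt_of_lt_of_le hlt (hzv i k)
      have h2 : 0 < ∑ p ∈ Finset.range (n+1) ×ˢ Finset.range (n+1),
          (N v p.1 p.2 - N u p.1 p.2) := by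
        apply Finset.sum_pos'
        · intro p _; omega
        · exact ⟨(i, k), Finset.mem_product.mpr ⟨Finset.mem_range.mpr hi,
            Finset.mem_range.mpr hk⟩, by simp only; omega⟩
      omega
  | succ m ih =>
    intro u v hdom hphi
    by_cases hne : u = v
    · exact hne ▸ Relation.ReflTransGen.refl
    · obtain ⟨z, huz, hzv, i, k, hi, hk, hlt⟩ := exists_step_of_N_lt u v hdom hne
      have huz' : ∀ i k, N u i k ≤ N z i k := fun i k => N_le_of_le huz i k
      have hdec : (∑ p ∈ Finset.range (n+1) ×ˢ Finset.range (n+1),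
          (N v p.1 p.2 - N z p.1 p.2)) <
          ∑ p ∈ Finset.range (n+1) ×ˢ Finset.range (n+1),
          (N v p.1 p.2 - N u p.1 p.2) := by
        apply Finset.sum_lt_sum
        · intro p _
          have := huz' p.1 p.2
          omega
        · refine ⟨(i, k), Finset.mem_product.mpr ⟨Finset.mem_range.mpr hi,
            Finset.mem_range.mpr hk⟩, ?_⟩
          have h1 : N z i k ≤ N v i k := hzv i k
          simp only
          omega
      exact huz.trans (ih z v hzv (by omega))

lemma le_iff_N_le {u v : Equiv.Perm (Fin n)} :
    BruhatLE u v ↔ ∀ i k, N u i k ≤ N v i k := by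
  constructor
  · exact fun h i k => N_le_of_le h i k
  · intro h
    exact le_of_N_le _ u v h le_rfl

lemma cov_iff_step {u v : Equiv.Perm (Fin n)} : BruhatCov u v ↔ BruhatStep u v := by
  constructor
  · rintro ⟨hle, hne, hbet⟩
    rcases Relation.ReflTransGen.cases_head hle with rfl | ⟨z, hz, hzv⟩
    · exact absurd rfl hne
    · rcases hbet z (Relation.ReflTransGen.single hz) hzv with rfl | rfl
      · exfalso; have := hz.2; omega
      · exact hz
  · intro h
    have hne : u ≠ v := by
      intro heq
      have := h.2
      rw [heq] at this
      omega
    refine ⟨Relation.ReflTransGen.single h, hne, ?_⟩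
    intro z h1 h2
    have l1 := numInv_le_of_le h1
    have l2 := numInv_le_of_le h2
    have l3 := h.2
    by_cases hz : numInv z ≤ numInv u
    · exact Or.inl (eq_of_le_of_numInv_le h1 hz).symm
    · exact Or.inr (eq_of_le_of_numInv_le h2 (by omega))

lemma swap_eq_swap {a b c d : Fin n} (hab : a < b) (hcd : c < d)
    (h : Equiv.swap a b = Equiv.swap c d) : a = c ∧ b = d := by
  have h1 : Equiv.swap c d a = b := by rw [← h, Equiv.swap_apply_left]
  rcases eq_or_ne a c with rfl | hac
  · rw [Equiv.swap_apply_left] at h1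
    exact ⟨rfl, h1.symm⟩
  · rcases eq_or_ne a d with rfl | had
    · rw [Equiv.swap_apply_right] at h1
      exfalso
      have h2 : c.1 < a.1 := hcd
      have h3 : a.1 < b.1 := hab
      have h4 : c.1 = b.1 := congrArg Fin.val h1
      omega
    · rw [Equiv.swap_apply_of_ne_of_ne hac had] at h1
      exact absurd h1 (ne_of_lt hab)

lemma transLT_iff {a b c d : Fin n} (hab : a < b) (hcd : c < d) :
    transLT (Equiv.swap a b) (Equiv.swap c d) ↔ (a < c ∨ (a = c ∧ b < d)) := by
  constructor
  · rintro ⟨a', b', c', d', hab', hcd', h1, h2, h3⟩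
    obtain ⟨rfl, rfl⟩ := swap_eq_swap hab hab' h1
    obtain ⟨rfl, rfl⟩ := swap_eq_swap hcd hcd' h2
    exact h3
  · intro h
    exact ⟨a, b, c, d, hab, hcd, rfl, rfl, h⟩

lemma chain_le : ∀ (l : List (Equiv.Perm (Fin n))) (x v : Equiv.Perm (Fin n)),
    List.Chain' BruhatCov (x :: l) → (x :: l).getLast? = some v → BruhatLE x v := by
  intro l
  induction l with
  | nil =>
    intro x v _ hlast
    simp only [List.getLast?_singleton, Option.some.injEq] at hlast
    exact hlast ▸ Relation.ReflTransGen.refl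
  | cons y l' ih =>
    intro x v hchain hlast
    rw [List.Chain', List.isChain_cons_cons] at hchain
    have h1 : BruhatLE x y := hchain.1.1
    have h2 := ih y v hchain.2 (by rw [← hlast, List.getLast?_cons_cons])
    exact h1.trans h2

lemma count_pos_val (u : Equiv.Perm (Fin n)) (i k : ℕ) :
    ∑ j : Fin n, (if j.1 < i ∧ (u j).1 < k then 1 else 0) =
    ∑ c : Fin n, (if (u⁻¹ c).1 < i ∧ c.1 < k then 1 else 0) := by
  apply Fintype.sum_equiv u
  intro j
  rw [Equiv.Perm.inv_apply_self]

lemma N_compl (u : Equiv.Perm (Fin n)) (i k : ℕ) :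
    N u i k + ∑ j : Fin n, (if j.1 < i ∧ (u j).1 < k then 1 else 0) =
    ∑ j : Fin n, (if j.1 < i then 1 else 0) := by
  rw [N, ← Finset.sum_add_distrib]
  apply Finset.sum_congr rfl
  intro j _
  split_ifs <;> omega

lemma no_small_label (u v : Equiv.Perm (Fin n)) (a b : Fin n) (hab : a < b)
    (hpq : u⁻¹ a < u⁻¹ b)
    (hpin : ∀ c : Fin n, c.1 ≤ a.1 → u⁻¹ c = v⁻¹ c)
    (hle : BruhatLE (Equiv.swap a b * u) v) : False := by
  have hdom := (le_iff_N_le).1 hle ((u⁻¹ a).1 + 1) (a.1 + 1)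
  rw [N_swap u a b hab hpq, rect] at hdom
  have hab' : a.1 < b.1 := hab
  have hpq' : (u⁻¹ a).1 < (u⁻¹ b).1 := hpq
  rw [if_pos ⟨by omega, by omega, by omega, by omega⟩] at hdom
  have cu := N_compl u ((u⁻¹ a).1 + 1) (a.1 + 1)
  have cv := N_compl v ((u⁻¹ a).1 + 1) (a.1 + 1)
  have eu := count_pos_val u ((u⁻¹ a).1 + 1) (a.1 + 1)
  have ev := count_pos_val v ((u⁻¹ a).1 + 1) (a.1 + 1)
  have heq : ∑ c : Fin n, (if (u⁻¹ c).1 < (u⁻¹ a).1 + 1 ∧ c.1 < a.1 + 1 then 1 else 0) =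
      ∑ c : Fin n, (if (v⁻¹ c).1 < (u⁻¹ a).1 + 1 ∧ c.1 < a.1 + 1 then 1 else 0) := by
    apply Finset.sum_congr rfl
    intro c _
    by_cases hc : c.1 ≤ a.1
    · rw [hpin c hc]
    · rw [if_neg (by omega), if_neg (by omega)]
  omega

lemma blabels_cons (x y : Equiv.Perm (Fin n)) (l : List (Equiv.Perm (Fin n))) :
    blabels (x :: y :: l) = (y * x⁻¹) :: blabels (y :: l) := rfl

lemma first_mover : ∀ (l : List (Equiv.Perm (Fin n))) (x v : Equiv.Perm (Fin n))
    (a' : Fin n), List.Chain' BruhatCov (x :: l) → (x :: l).getLast? = some v →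
    (∀ c : Fin n, c.1 < a'.1 → x⁻¹ c = v⁻¹ c) → x⁻¹ a' ≠ v⁻¹ a' →
    ∃ d : Fin n, a' < d ∧ Equiv.swap a' d ∈ blabels (x :: l) := by
  intro l
  induction l with
  | nil =>
    intro x v a' _ hlast _ hnp
    simp only [List.getLast?_singleton, Option.some.injEq] at hlast
    exact absurd (hlast ▸ rfl) hnp
  | cons y l' ih =>
    intro x v a' hchain hlast hpin hnp
    rw [List.Chain', List.isChain_cons_cons] at hchain
    have hstep := cov_iff_step.1 hchain.1
    obtain ⟨a, b, hab, hpq, hm, hy⟩ := step_char.1 hstep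
    have hyv : BruhatLE y v := chain_le l' y v hchain.2
      (by rw [← hlast, List.getLast?_cons_cons])
    have hya : ¬ a.1 < a'.1 := by
      intro hlt
      apply no_small_label x v a b hab hpq ?_ (hy ▸ hyv)
      intro c hc
      exact hpin c (by omega)
    rcases eq_or_ne a a' with rfl | hne
    · refine ⟨b, hab, ?_⟩
      rw [blabels_cons, hy]
      simp only [List.mem_cons]
      left
      rw [mul_inv_cancel_right]
    · have haa' : a'.1 < a.1 := by
        have : a.1 ≠ a'.1 := fun h => hne (Fin.val_injective h)
        omega
      have hab' : a.1 < b.1 := hab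
      have hpin' : ∀ c : Fin n, c.1 < a'.1 → y⁻¹ c = v⁻¹ c := by
        intro c hc
        rw [hy, inv_swap_ne x a b c (by intro h; rw [h] at hc; omega)
          (by intro h; rw [h] at hc; omega)]
        exact hpin c hc
      have hnp' : y⁻¹ a' ≠ v⁻¹ a' := by
        rw [hy, inv_swap_ne x a b a' (by intro h; rw [h] at haa'; omega)
          (by intro h; rw [h] at haa'; omega)]
        exact hnp
      obtain ⟨d, hd1, hd2⟩ := ih y v a' hchain.2
        (by rw [← hlast, List.getLast?_cons_cons]) hpin' hnp'
      exact ⟨d, hd1, by rw [blabels_cons]; exact List.mem_cons_of_mem _ hd2⟩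

lemma flt {x y : Fin n} (h : x.1 < y.1) : x < y := h

lemma mid_zero_elim {u : Equiv.Perm (Fin n)} {e f : Fin n} (h : mid u e f = 0) (j : Fin n)
    (h1 : (u⁻¹ e).1 < j.1) (h2 : j.1 < (u⁻¹ f).1) (h3 : e.1 < (u j).1)
    (h4 : (u j).1 < f.1) : False := by
  have h5 := Finset.sum_eq_zero_iff.1 h j (Finset.mem_univ j)
  rw [if_pos ⟨h1, h2, h3, h4⟩] at h5
  omega

lemma mid_zero_intro {u : Equiv.Perm (Fin n)} {e f : Fin n}
    (h : ∀ j : Fin n, (u⁻¹ e).1 < j.1 → j.1 < (u⁻¹ f).1 → e.1 < (u j).1 →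
      (u j).1 < f.1 → False) : mid u e f = 0 := by
  apply Finset.sum_eq_zero
  intro j _
  rw [if_neg]
  rintro ⟨h1, h2, h3, h4⟩
  exact h j h1 h2 h3 h4

lemma step_data {u : Equiv.Perm (Fin n)} {a b : Fin n} (hab : a < b)
    (h : BruhatStep u (Equiv.swap a b * u)) : u⁻¹ a < u⁻¹ b ∧ mid u a b = 0 := by
  obtain ⟨a', b', hab', hpq', hm', heq⟩ := step_char.1 h
  have hsw : Equiv.swap a b = Equiv.swap a' b' := mul_right_cancel heq
  obtain ⟨rfl, rfl⟩ := swap_eq_swap hab hab' hsw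
  exact ⟨hpq', hm'⟩

lemma candidate_helper (u v : Equiv.Perm (Fin n)) (e f : Fin n) (hef : e < f)
    (hpos : u⁻¹ e < u⁻¹ f) (hmid : mid u e f = 0)
    (hdom : ∀ i k, N u i k + rect (u⁻¹ e).1 (u⁻¹ f).1 e.1 f.1 i k ≤ N v i k) :
    BruhatStep u (Equiv.swap e f * u) ∧ BruhatLE (Equiv.swap e f * u) v := by
  refine ⟨step_of_mid_zero u e f hef hpos hmid, le_iff_N_le.2 ?_⟩
  intro i k
  rw [N_swap u e f hef hpos]
  exact hdom i k

lemma pos_ne_of_ne (u : Equiv.Perm (Fin n)) {x y : Fin n} (h : x ≠ y) :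
    (u⁻¹ x).1 ≠ (u⁻¹ y).1 :=
  fun hc => h (u⁻¹.injective (Fin.val_injective hc))

lemma caseA (u v : Equiv.Perm (Fin n)) (a b0 b1 : Fin n) (hab0 : a < b0) (hb01 : b0 < b1)
    (h0 : BruhatStep u (Equiv.swap a b0 * u)) (h1 : BruhatStep u (Equiv.swap a b1 * u))
    (h0v : BruhatLE (Equiv.swap a b0 * u) v)
    (h1v : BruhatLE (Equiv.swap a b1 * u) v) :
    BruhatStep (Equiv.swap a b1 * u) (Equiv.swap a b0 * (Equiv.swap a b1 * u)) ∧
    BruhatLE (Equiv.swap a b0 * (Equiv.swap a b1 * u)) v := by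
  have hab1 : a < b1 := lt_trans hab0 hb01
  obtain ⟨hpq0, hm0⟩ := step_data hab0 h0
  obtain ⟨hpq1, hm1⟩ := step_data hab1 h1
  have hab0' : a.1 < b0.1 := hab0
  have hb01' : b0.1 < b1.1 := hb01
  have hpq0' : (u⁻¹ a).1 < (u⁻¹ b0).1 := hpq0
  have hpq1' : (u⁻¹ a).1 < (u⁻¹ b1).1 := hpq1
  have hq10 : (u⁻¹ b1).1 < (u⁻¹ b0).1 := by
    have hne := pos_ne_of_ne u (show b0 ≠ b1 from ne_of_lt hb01)
    by_contra hc
    exact mid_zero_elim hm1 (u⁻¹ b0) hpq0' (by omega)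
      (by rw [Equiv.Perm.apply_inv_self]; omega)
      (by rw [Equiv.Perm.apply_inv_self]; omega)
  have hz1a : (Equiv.swap a b1 * u)⁻¹ a = u⁻¹ b1 := inv_swap_left u a b1
  have hz1b0 : (Equiv.swap a b1 * u)⁻¹ b0 = u⁻¹ b0 :=
    inv_swap_ne u a b1 b0 (by intro h; rw [h] at hab0'; omega)
      (by intro h; rw [h] at hb01'; omega)
  have hz1pos : (Equiv.swap a b1 * u)⁻¹ a < (Equiv.swap a b1 * u)⁻¹ b0 := by
    rw [hz1a, hz1b0]; exact Fin.mk_lt_mk.mpr hq10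
  have hz1mid : mid (Equiv.swap a b1 * u) a b0 = 0 := by
    apply mid_zero_intro
    intro j h1' h2' h3' h4'
    rw [hz1a] at h1'
    rw [hz1b0] at h2'
    have hjne1 : j ≠ u⁻¹ a := by
      intro h; rw [h] at h1'; omega
    have hjne2 : j ≠ u⁻¹ b1 := by
      intro h; rw [h] at h1'; omega
    rw [swap_mul_apply_ne u a b1 j hjne1 hjne2] at h3' h4'
    exact mid_zero_elim hm0 j (by omega) h2' h3' h4'
  refine ⟨step_of_mid_zero _ a b0 hab0 hz1pos hz1mid, le_iff_N_le.2 ?_⟩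
  intro i k
  rw [N_swap _ a b0 hab0 hz1pos, hz1a, hz1b0, N_swap u a b1 hab1 hpq1]
  have d0 := N_le_of_le h0v i k
  have d1 := N_le_of_le h1v i k
  rw [N_swap u a b0 hab0 hpq0] at d0
  rw [N_swap u a b1 hab1 hpq1] at d1
  simp only [rect] at *
  split_ifs at * <;> omega

lemma lemV (u v : Equiv.Perm (Fin n)) (a b c d : Fin n) (hab : a < b) (hcd : c < d)
    (h0 : BruhatStep u (Equiv.swap a b * u))
    (h1 : BruhatStep (Equiv.swap a b * u) (Equiv.swap c d * (Equiv.swap a b * u)))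
    (hv : BruhatLE (Equiv.swap c d * (Equiv.swap a b * u)) v)
    (hlt : c.1 < a.1 ∨ (c = a ∧ d.1 < b.1)) :
    ∃ e f : Fin n, e < f ∧ (e.1 < a.1 ∨ (e = a ∧ f.1 < b.1)) ∧
      BruhatStep u (Equiv.swap e f * u) ∧ BruhatLE (Equiv.swap e f * u) v := by
  obtain ⟨hpq, hm0⟩ := step_data hab h0
  obtain ⟨hzpos, hmz⟩ := step_data hcd h1
  have hab' : a.1 < b.1 := hab
  have hcd' : c.1 < d.1 := hcd
  have hpq' : (u⁻¹ a).1 < (u⁻¹ b).1 := hpq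
  have hz0a : (Equiv.swap a b * u)⁻¹ a = u⁻¹ b := inv_swap_left u a b
  have hz0b : (Equiv.swap a b * u)⁻¹ b = u⁻¹ a := inv_swap_right u a b
  have hvd : ∀ i k, N u i k + rect (u⁻¹ a).1 (u⁻¹ b).1 a.1 b.1 i k +
      rect ((Equiv.swap a b * u)⁻¹ c).1 ((Equiv.swap a b * u)⁻¹ d).1 c.1 d.1 i k ≤
      N v i k := by
    intro i k
    have h := N_le_of_le hv i k
    rw [N_swap _ c d hcd hzpos, N_swap u a b hab hpq] at h
    omega
  rcases hlt with hca | ⟨hceq, hdb⟩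
  · -- c < a
    have hca' : c.1 < a.1 := hca
    have hcna : c ≠ a := fun h => by rw [h] at hca'; omega
    have hcnb : c ≠ b := fun h => by rw [h] at hca'; omega
    have hz0c : (Equiv.swap a b * u)⁻¹ c = u⁻¹ c := inv_swap_ne u a b c hcna hcnb
    rcases eq_or_ne d a with hdeq | hda
    · -- d = a
      have hdeq' := hdeq.symm
      subst hdeq'
      have hzpos' : (u⁻¹ c).1 < (u⁻¹ b).1 := by
        have := hzpos
        rw [hz0c, hz0a] at this
        exact this
      have hprne : (u⁻¹ c).1 ≠ (u⁻¹ a).1 := pos_ne_of_ne u hcna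
      rcases lt_or_gt_of_ne hprne with hrp | hpr
      · -- r < p : candidate (c, a)
        refine ⟨c, a, hca, Or.inl hca', ?_⟩
        apply candidate_helper u v c a hca (Fin.mk_lt_mk.mpr hrp) ?_ ?_
        · apply mid_zero_intro
          intro j h1' h2' h3' h4'
          have hjp : j ≠ u⁻¹ a := by intro h; rw [h] at h2'; omega
          have hjq : j ≠ u⁻¹ b := by intro h; rw [h] at h2'; omega
          have hz0j := swap_mul_apply_ne u a b j hjp hjq
          apply mid_zero_elim hmz j (by rw [hz0c]; omega)
            (by rw [hz0a]; omega) (by rw [hz0j]; omega) (by rw [hz0j]; omega)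
        · intro i k
          have h := hvd i k
          rw [hz0c, hz0a] at h
          simp only [rect] at h ⊢
          split_ifs at * <;> omega
      · -- p < r : candidate (c, b)
        refine ⟨c, b, lt_trans hca hab, Or.inl hca', ?_⟩
        apply candidate_helper u v c b (lt_trans hca hab) (Fin.mk_lt_mk.mpr hzpos') ?_ ?_
        · apply mid_zero_intro
          intro j h1' h2' h3' h4'
          rcases lt_trichotomy (u j).1 a.1 with hja | hja | hja
          · have hjp : j ≠ u⁻¹ a := by
              intro h; rw [h, Equiv.Perm.apply_inv_self] at hja; omega
            have hjq : j ≠ u⁻¹ b := by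
              intro h; rw [h, Equiv.Perm.apply_inv_self] at hja; omega
            have hz0j := swap_mul_apply_ne u a b j hjp hjq
            apply mid_zero_elim hmz j (by rw [hz0c]; omega)
              (by rw [hz0a]; omega) (by rw [hz0j]; omega) (by rw [hz0j]; omega)
          · have : j = u⁻¹ a := by
              apply u.injective
              rw [Equiv.Perm.apply_inv_self]
              exact Fin.val_injective hja
            rw [this] at h1'
            omega
          · exact mid_zero_elim hm0 j (by omega) h2' hja h4'
        · intro i k
          have h := hvd i k
          rw [hz0c, hz0a] at h
          simp only [rect] at h ⊢
          split_ifs at * <;> omega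
    · rcases eq_or_ne d b with hdeq | hdb'
      · -- d = b : candidate (c, a)
        have hdeq' := hdeq.symm
        subst hdeq'
        have hzpos' : (u⁻¹ c).1 < (u⁻¹ a).1 := by
          have := hzpos
          rw [hz0c, hz0b] at this
          exact this
        refine ⟨c, a, hca, Or.inl hca', ?_⟩
        apply candidate_helper u v c a hca (Fin.mk_lt_mk.mpr hzpos') ?_ ?_
        · apply mid_zero_intro
          intro j h1' h2' h3' h4'
          have hjp : j ≠ u⁻¹ a := by intro h; rw [h] at h2'; omega
          have hjq : j ≠ u⁻¹ b := by intro h; rw [h] at h2'; omega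
          have hz0j := swap_mul_apply_ne u a b j hjp hjq
          apply mid_zero_elim hmz j (by rw [hz0c]; omega)
            (by rw [hz0b]; omega) (by rw [hz0j]; omega) (by rw [hz0j]; omega)
        · intro i k
          have h := hvd i k
          rw [hz0c, hz0b] at h
          simp only [rect] at h ⊢
          split_ifs at * <;> omega
      · -- d ∉ {a, b}
        have hz0d : (Equiv.swap a b * u)⁻¹ d = u⁻¹ d := inv_swap_ne u a b d hda hdb'
        have hzpos' : (u⁻¹ c).1 < (u⁻¹ d).1 := by
          have := hzpos
          rw [hz0c, hz0d] at this
          exact this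
        have hda' : d.1 ≠ a.1 := fun h => hda (Fin.val_injective h)
        have hdb'' : d.1 ≠ b.1 := fun h => hdb' (Fin.val_injective h)
        by_cases hA : a.1 < d.1 ∧ (u⁻¹ c).1 < (u⁻¹ a).1 ∧ (u⁻¹ a).1 < (u⁻¹ d).1
        · -- candidate (c, a)
          refine ⟨c, a, hca, Or.inl hca', ?_⟩
          apply candidate_helper u v c a hca (Fin.mk_lt_mk.mpr hA.2.1) ?_ ?_
          · apply mid_zero_intro
            intro j h1' h2' h3' h4'
            have hjp : j ≠ u⁻¹ a := by intro h; rw [h] at h2'; omega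
            have hjq : j ≠ u⁻¹ b := by intro h; rw [h] at h2'; omega
            have hz0j := swap_mul_apply_ne u a b j hjp hjq
            apply mid_zero_elim hmz j (by rw [hz0c]; omega)
              (by rw [hz0d]; omega) (by rw [hz0j]; omega) (by rw [hz0j]; omega)
          · intro i k
            have h := hvd i k
            rw [hz0c, hz0d] at h
            simp only [rect] at h ⊢
            split_ifs at * <;> omega
        · by_cases hB : b.1 < d.1 ∧ (u⁻¹ c).1 < (u⁻¹ b).1 ∧ (u⁻¹ b).1 < (u⁻¹ d).1
          · -- candidate (c, b)
            refine ⟨c, b, lt_trans hca hab, Or.inl hca', ?_⟩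
            apply candidate_helper u v c b (lt_trans hca hab)
              (Fin.mk_lt_mk.mpr hB.2.1) ?_ ?_
            · apply mid_zero_intro
              intro j h1' h2' h3' h4'
              rcases eq_or_ne j (u⁻¹ a) with rfl | hjp
              · rw [Equiv.Perm.apply_inv_self] at h3' h4'
                exact hA ⟨by omega, by omega, by omega⟩
              · have hjq : j ≠ u⁻¹ b := by intro h; rw [h] at h2'; omega
                have hz0j := swap_mul_apply_ne u a b j hjp hjq
                apply mid_zero_elim hmz j (by rw [hz0c]; omega)
                  (by rw [hz0d]; omega) (by rw [hz0j]; omega) (by rw [hz0j]; omega)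
            · intro i k
              have h := hvd i k
              rw [hz0c, hz0d] at h
              simp only [rect] at h ⊢
              split_ifs at * <;> omega
          · -- candidate (c, d)
            refine ⟨c, d, hcd, Or.inl hca', ?_⟩
            apply candidate_helper u v c d hcd (Fin.mk_lt_mk.mpr hzpos') ?_ ?_
            · apply mid_zero_intro
              intro j h1' h2' h3' h4'
              rcases eq_or_ne j (u⁻¹ a) with rfl | hjp
              · rw [Equiv.Perm.apply_inv_self] at h3' h4'
                exact hA ⟨by omega, by omega, by omega⟩
              · rcases eq_or_ne j (u⁻¹ b) with rfl | hjq
                · rw [Equiv.Perm.apply_inv_self] at h3' h4'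
                  apply hB
                  refine ⟨by omega, by omega, by omega⟩
                · have hz0j := swap_mul_apply_ne u a b j hjp hjq
                  apply mid_zero_elim hmz j (by rw [hz0c]; omega)
                    (by rw [hz0d]; omega) (by rw [hz0j]; omega) (by rw [hz0j]; omega)
            · intro i k
              have h := hvd i k
              rw [hz0c, hz0d] at h
              simp only [rect] at h ⊢
              split_ifs at * <;> omega
  · -- c = a, d < b : candidate (a, d)
    have hceq' := hceq.symm
    subst hceq'
    have hdb' : d.1 < b.1 := hdb
    have had : a.1 < d.1 := hcd
    have hdna : d ≠ a := fun h => by rw [h] at had; omega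
    have hdnb : d ≠ b := fun h => by rw [h] at hdb'; omega
    have hz0d : (Equiv.swap a b * u)⁻¹ d = u⁻¹ d := inv_swap_ne u a b d hdna hdnb
    have hzpos' : (u⁻¹ b).1 < (u⁻¹ d).1 := by
      have := hzpos
      rw [hz0a, hz0d] at this
      exact this
    refine ⟨a, d, hcd, Or.inr ⟨rfl, hdb'⟩, ?_⟩
    apply candidate_helper u v a d hcd (flt (by omega)) ?_ ?_
    · apply mid_zero_intro
      intro j h1' h2' h3' h4'
      rcases lt_trichotomy j.1 (u⁻¹ b).1 with hjq | hjq | hjq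
      · exact mid_zero_elim hm0 j h1' hjq h3' (by omega)
      · have : j = u⁻¹ b := Fin.val_injective hjq
        rw [this, Equiv.Perm.apply_inv_self] at h4'
        omega
      · have hjp : j ≠ u⁻¹ a := by intro h; rw [h] at hjq; omega
        have hjq' : j ≠ u⁻¹ b := by intro h; rw [h] at hjq; omega
        have hz0j := swap_mul_apply_ne u a b j hjp hjq'
        apply mid_zero_elim hmz j (by rw [hz0a]; omega)
          (by rw [hz0d]; omega) (by rw [hz0j]; omega) (by rw [hz0j]; omega)
    · intro i k
      have h := hvd i k
      rw [hz0a, hz0d] at h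
      simp only [rect] at h ⊢
      split_ifs at * <;> omega

lemma le_of_bsat {c : List (Equiv.Perm (Fin n))} {u v : Equiv.Perm (Fin n)}
    (h : BSatChain c u v) : BruhatLE u v := by
  obtain ⟨hch, hhd, hlast⟩ := h
  match c with
  | [] => simp at hhd
  | x :: l =>
    simp only [List.head?_cons, Option.some.injEq] at hhd
    subst hhd
    exact chain_le l x v hch hlast

lemma bsat_cons_elim {x y : Equiv.Perm (Fin n)} {l : List (Equiv.Perm (Fin n))}
    {u v : Equiv.Perm (Fin n)} (h : BSatChain (x :: y :: l) u v) :
    x = u ∧ BruhatStep u y ∧ BSatChain (y :: l) y v := by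
  obtain ⟨hch, hhd, hlast⟩ := h
  simp only [List.head?_cons, Option.some.injEq] at hhd
  subst hhd
  rw [List.Chain', List.isChain_cons_cons] at hch
  exact ⟨rfl, cov_iff_step.1 hch.1, hch.2, rfl,
    by rw [← hlast, List.getLast?_cons_cons]⟩

lemma bsat_shape {c : List (Equiv.Perm (Fin n))} {u v : Equiv.Perm (Fin n)}
    (h : BSatChain c u v) (hne : u ≠ v) :
    ∃ y l, c = u :: y :: l := by
  obtain ⟨hch, hhd, hlast⟩ := h
  match c with
  | [] => simp at hhd
  | [x] =>
    simp only [List.head?_cons, Option.some.injEq] at hhd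
    simp only [List.getLast?_singleton, Option.some.injEq] at hlast
    exact absurd (hhd ▸ hlast) hne
  | x :: y :: l =>
    simp only [List.head?_cons, Option.some.injEq] at hhd
    exact ⟨y, l, by rw [hhd]⟩

lemma chain'_rel_of_mem {x y : Equiv.Perm (Fin n)} :
    ∀ (l : List (Equiv.Perm (Fin n))), List.Chain' transLE (x :: l) → y ∈ l →
    transLE x y := by
  intro l
  induction l generalizing x with
  | nil => intro _ h; simp at h
  | cons z l' ih =>
    intro hch hy
    rw [List.Chain', List.isChain_cons_cons] at hch
    rcases List.mem_cons.1 hy with rfl | hy'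
    · exact hch.1
    · have h2 := ih (x := z) hch.2 hy'
      rcases hch.1 with rfl | hlt1
      · exact h2
      · rcases h2 with rfl | hlt2
        · exact Or.inr hlt1
        · obtain ⟨a, b, c, d, hab, hcd, rfl, rfl, hor1⟩ := hlt1
          obtain ⟨a', b', c', d', hab', hcd', heq, rfl, hor2⟩ := hlt2
          obtain ⟨rfl, rfl⟩ := swap_eq_swap hcd hab' heq
          refine Or.inr ⟨a, b, c', d', hab, hcd', rfl, rfl, ?_⟩
          have e1 : a.1 < b.1 := hab
          have e2 : c'.1 < d'.1 := hcd'
          rcases hor1 with h | ⟨rfl, h⟩ <;> rcases hor2 with h' | ⟨rfl, h'⟩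
          · left; exact lt_trans h h'
          · left; exact h
          · left; exact h'
          · right; exact ⟨rfl, lt_trans h h'⟩

lemma u_ne_v_of_step {u y v : Equiv.Perm (Fin n)} (hstep : BruhatStep u y)
    (hyv : BruhatLE y v) : u ≠ v := by
  intro heq
  have h1 := hstep.2
  have h2 := numInv_le_of_le hyv
  rw [heq] at h1
  omega

lemma minsupp_exists {u v : Equiv.Perm (Fin n)} (hne : u ≠ v) :
    ∃ astar : Fin n, u⁻¹ astar ≠ v⁻¹ astar ∧
      ∀ x : Fin n, x.1 < astar.1 → u⁻¹ x = v⁻¹ x := by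
  classical
  have hSne : ((univ : Finset (Fin n)).filter (fun x => u⁻¹ x ≠ v⁻¹ x)).Nonempty := by
    by_contra hc
    apply hne
    have : u⁻¹ = v⁻¹ := by
      apply Equiv.ext
      intro x
      by_contra hx
      have hx2 : x ∈ (univ : Finset (Fin n)).filter (fun x => u⁻¹ x ≠ v⁻¹ x) :=
        Finset.mem_filter.mpr ⟨Finset.mem_univ x, hx⟩
      exact hc ⟨x, hx2⟩
    have := congrArg (·⁻¹) this
    simpa using this
  refine ⟨((univ : Finset (Fin n)).filter (fun x => u⁻¹ x ≠ v⁻¹ x)).min' hSne,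
    (Finset.mem_filter.1 (Finset.min'_mem _ hSne)).2, ?_⟩
  intro x hx
  by_contra hc
  have hx2 : x ∈ (univ : Finset (Fin n)).filter (fun x => u⁻¹ x ≠ v⁻¹ x) :=
    Finset.mem_filter.mpr ⟨Finset.mem_univ x, hc⟩
  have h2 := Finset.min'_le _ x hx2
  have : (((univ : Finset (Fin n)).filter (fun x => u⁻¹ x ≠ v⁻¹ x)).min' hSne).1 ≤ x.1 := h2
  omega

lemma lemU : ∀ (m : ℕ) (u v : Equiv.Perm (Fin n)), numInv v ≤ numInv u + m →
    ∀ (a1 b1 : Fin n) (l : List (Equiv.Perm (Fin n))), a1 < b1 →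
    BruhatStep u (Equiv.swap a1 b1 * u) →
    BSatChain ((Equiv.swap a1 b1 * u) :: l) (Equiv.swap a1 b1 * u) v →
    List.Chain' transLE (blabels (u :: (Equiv.swap a1 b1 * u) :: l)) →
    ∀ (e f : Fin n), e < f → BruhatStep u (Equiv.swap e f * u) →
    BruhatLE (Equiv.swap e f * u) v →
    e.1 = a1.1 ∧ f.1 = b1.1 ∨ a1.1 < e.1 ∨ (a1 = e ∧ b1.1 < f.1) := by
  intro m
  induction m with
  | zero =>
    intro u v hm a1 b1 l h1ab hstep1 hsat hasc e f hef hstepe hlev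
    exfalso
    have h1 := hstep1.2
    have h2 := numInv_le_of_le (le_of_bsat hsat)
    omega
  | succ m ih =>
    intro u v hm a1 b1 l h1ab hstep1 hsat hasc e f hef hstepe hlev
    have h1ab' : a1.1 < b1.1 := h1ab
    have hef' : e.1 < f.1 := hef
    have hyv : BruhatLE (Equiv.swap a1 b1 * u) v := le_of_bsat hsat
    by_cases hefeq : e.1 = a1.1 ∧ f.1 = b1.1
    · exact Or.inl hefeq
    rcases lt_trichotomy e.1 a1.1 with hlt | heq | hgt
    · -- first mover contradiction
      exfalso
      have hune : u ≠ v := u_ne_v_of_step hstep1 hyv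
      obtain ⟨astar, hastar, hpin⟩ := minsupp_exists hune
      obtain ⟨hpqe, _⟩ := step_data hef hstepe
      have hstar : astar.1 ≤ e.1 := by
        by_contra hc
        exact no_small_label u v e f hef hpqe (fun x hx => hpin x (by omega)) hlev
      have hpin' : ∀ x : Fin n, x.1 < astar.1 →
          (Equiv.swap a1 b1 * u)⁻¹ x = v⁻¹ x := by
        intro x hx
        rw [inv_swap_ne u a1 b1 x (by intro h; rw [h] at hx; omega)
          (by intro h; rw [h] at hx; omega)]
        exact hpin x hx
      have hnp' : (Equiv.swap a1 b1 * u)⁻¹ astar ≠ v⁻¹ astar := by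
        rw [inv_swap_ne u a1 b1 astar (by intro h; rw [h] at hstar; omega)
          (by intro h; rw [h] at hstar; omega)]
        exact hastar
      obtain ⟨dstar, hd, hmem⟩ := first_mover l (Equiv.swap a1 b1 * u) v astar
        hsat.1 hsat.2.2 hpin' hnp'
      have hlab : (Equiv.swap a1 b1 * u) * u⁻¹ = Equiv.swap a1 b1 :=
        mul_inv_cancel_right _ _
      have hrel : transLE (Equiv.swap a1 b1) (Equiv.swap astar dstar) := by
        have h2 := hasc
        rw [blabels_cons, hlab] at h2
        exact chain'_rel_of_mem _ h2 hmem
      have hd' : astar.1 < dstar.1 := hd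
      rcases hrel with heq2 | hlt2
      · obtain ⟨h3, h4⟩ := swap_eq_swap h1ab hd heq2
        have := congrArg Fin.val h3
        omega
      · rw [transLT_iff h1ab hd] at hlt2
        rcases hlt2 with h3 | ⟨h3, h4⟩
        · have : a1.1 < astar.1 := h3
          omega
        · have := congrArg Fin.val h3
          omega
    · -- e = a1
      have heqf : a1 = e := (Fin.val_injective heq).symm
      subst heqf
      rcases lt_trichotomy f.1 b1.1 with hf | hf | hf
      · -- f < b1 : caseA route, contradiction
        exfalso
        obtain ⟨hstepw, hlew⟩ := caseA u v a1 f b1 hef (flt hf) hstepe hstep1 hlev hyv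
        cases l with
        | nil =>
          have hlast := hsat.2.2
          simp only [List.getLast?_singleton, Option.some.injEq] at hlast
          have h1 := hstepw.2
          have h2 := numInv_le_of_le hlew
          rw [hlast] at h1 h2
          omega
        | cons w1 l' =>
          obtain ⟨-, hstepw1, hsat'⟩ := bsat_cons_elim hsat
          obtain ⟨c1, d1, hc1d1, hpq1', hm1', hw1⟩ := step_char.1 hstepw1
          subst hw1
          have hc1d1' : c1.1 < d1.1 := hc1d1
          have hlab1 : (Equiv.swap a1 b1 * u) * u⁻¹ = Equiv.swap a1 b1 :=
            mul_inv_cancel_right _ _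
          have hlab2 : (Equiv.swap c1 d1 * (Equiv.swap a1 b1 * u)) *
              (Equiv.swap a1 b1 * u)⁻¹ = Equiv.swap c1 d1 :=
            mul_inv_cancel_right _ _
          have hasc' := hasc
          rw [blabels_cons, blabels_cons, List.Chain', List.isChain_cons_cons, hlab1, hlab2] at hasc'
          have h12 := hasc'.1
          have htail : List.Chain' transLE
              (blabels ((Equiv.swap a1 b1 * u) ::
                (Equiv.swap c1 d1 * (Equiv.swap a1 b1 * u)) :: l')) := by
            rw [blabels_cons, hlab2]
            exact hasc'.2
          have hnum1 := hstep1.2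
          have hIH := ih (Equiv.swap a1 b1 * u) v (by omega) c1 d1 l' hc1d1
            hstepw1 hsat' htail a1 f hef hstepw hlew
          have hval12 : (a1.1 = c1.1 ∧ b1.1 = d1.1) ∨ a1.1 < c1.1 ∨
              (a1.1 = c1.1 ∧ b1.1 < d1.1) := by
            rcases h12 with heq2 | hlt2
            · obtain ⟨h3, h4⟩ := swap_eq_swap h1ab hc1d1 heq2
              exact Or.inl ⟨congrArg Fin.val h3, congrArg Fin.val h4⟩
            · rw [transLT_iff h1ab hc1d1] at hlt2
              rcases hlt2 with h3 | ⟨h3, h4⟩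
              · exact Or.inr (Or.inl h3)
              · exact Or.inr (Or.inr ⟨congrArg Fin.val h3, h4⟩)
          have hvalIH : (a1.1 = c1.1 ∧ f.1 = d1.1) ∨ c1.1 < a1.1 ∨
              (c1.1 = a1.1 ∧ d1.1 < f.1) := by
            rcases hIH with h3 | h3 | ⟨h3, h4⟩
            · exact Or.inl h3
            · exact Or.inr (Or.inl h3)
            · exact Or.inr (Or.inr ⟨congrArg Fin.val h3, h4⟩)
          omega
      · exact absurd ⟨heq.symm ▸ rfl, hf⟩ hefeq
      · exact Or.inr (Or.inr ⟨rfl, hf⟩)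
    · exact Or.inr (Or.inl hgt)

lemma key_lemma {a b e f : Fin n} (h : a.1 * n + b.1 ≤ e.1 * n + f.1)
    (hb : b.1 < n) (hf : f.1 < n) : a.1 < e.1 ∨ (a.1 = e.1 ∧ b.1 ≤ f.1) := by
  rcases lt_trichotomy a.1 e.1 with hx | hx | hx
  · exact Or.inl hx
  · rw [hx] at h
    exact Or.inr ⟨hx, by omega⟩
  · exfalso
    have h2 : (e.1 + 1) * n ≤ a.1 * n := Nat.mul_le_mul_right n (by omega)
    rw [add_one_mul] at h2
    omega

lemma numInv_lt_of_ne {u v : Equiv.Perm (Fin n)} (h : BruhatLE u v) (hne : u ≠ v) :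
    numInv u < numInv v := by
  rcases Relation.ReflTransGen.cases_head h with rfl | ⟨z, hz, hzv⟩
  · exact absurd rfl hne
  · have h1 := hz.2
    have h2 := numInv_le_of_le hzv
    omega

lemma bsat_self {c : List (Equiv.Perm (Fin n))} {u : Equiv.Perm (Fin n)}
    (h : BSatChain c u u) : c = [u] := by
  match c with
  | [] => simp [BSatChain] at h
  | [x] =>
    obtain ⟨-, hhd, -⟩ := h
    simp only [List.head?_cons, Option.some.injEq] at hhd
    rw [hhd]
  | x :: y :: l =>
    exfalso
    obtain ⟨-, hstep, hsat⟩ := bsat_cons_elim h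
    have h1 := hstep.2
    have h2 := numInv_le_of_le (le_of_bsat hsat)
    omega

lemma bsat_triv (u : Equiv.Perm (Fin n)) : BSatChain [u] u u :=
  ⟨List.isChain_singleton u, rfl, rfl⟩

lemma blabels_single (u : Equiv.Perm (Fin n)) : blabels [u] = [] := rfl

lemma master : ∀ (m : ℕ) (u v : Equiv.Perm (Fin n)), BruhatLE u v →
    numInv v ≤ numInv u + m →
    ∃ c : List (Equiv.Perm (Fin n)),
      (BSatChain c u v ∧ List.Chain' transLE (blabels c)) ∧
      (∀ c', BSatChain c' u v → List.Chain' transLE (blabels c') → c' = c) ∧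
      (∀ c', BSatChain c' u v → c' ≠ c → List.Lex transLT (blabels c) (blabels c')) := by
  intro m
  induction m with
  | zero =>
    intro u v h hm
    have huv : u = v := by
      by_contra hne
      have := numInv_lt_of_ne h hne
      omega
    subst huv
    refine ⟨[u], ⟨bsat_triv u, by rw [blabels_single]; exact List.isChain_nil⟩, ?_, ?_⟩
    · intro c' h' _
      exact bsat_self h'
    · intro c' h' hne
      exact absurd (bsat_self h') hne
  | succ m ih =>
    intro u v h hm
    classical
    by_cases hne : u = v
    · subst hne
      refine ⟨[u], ⟨bsat_triv u, by rw [blabels_single]; exact List.isChain_nil⟩, ?_, ?_⟩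
      · intro c' h' _
        exact bsat_self h'
      · intro c' h' hne
        exact absurd (bsat_self h') hne
    -- u ≠ v
    have hSne : ((univ : Finset (Fin n × Fin n)).filter (fun ab =>
        ab.1 < ab.2 ∧ BruhatStep u (Equiv.swap ab.1 ab.2 * u) ∧
        BruhatLE (Equiv.swap ab.1 ab.2 * u) v)).Nonempty := by
      rcases Relation.ReflTransGen.cases_head h with rfl | ⟨z, hz, hzv⟩
      · exact absurd rfl hne
      · obtain ⟨a, b, hab, hpq, hmz, hzeq⟩ := step_char.1 hz
        subst hzeq
        exact ⟨(a, b), Finset.mem_filter.mpr ⟨Finset.mem_univ _, hab, hz, hzv⟩⟩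
    obtain ⟨p0, hp0S, hp0min⟩ := Finset.exists_min_image _
      (fun ab : Fin n × Fin n => ab.1.1 * n + ab.2.1) hSne
    obtain ⟨a0, b0⟩ := p0
    obtain ⟨-, ha0b0, hstep0, h0v⟩ := Finset.mem_filter.1 hp0S
    dsimp only at ha0b0 hstep0 h0v hp0min
    have ha0b0' : a0.1 < b0.1 := ha0b0
    have hnum0 := hstep0.2
    obtain ⟨c0, ⟨hc0sat, hc0asc⟩, hc0uniq, hc0lex⟩ :=
      ih (Equiv.swap a0 b0 * u) v h0v (by omega)
    obtain ⟨c0t, rfl⟩ : ∃ t, c0 = (Equiv.swap a0 b0 * u) :: t := by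
      cases c0 with
      | nil => exact absurd hc0sat.2.1 (by simp)
      | cons x t =>
        have hx := hc0sat.2.1
        simp only [List.head?_cons, Option.some.injEq] at hx
        exact ⟨t, by rw [hx]⟩
    have hlab0 : (Equiv.swap a0 b0 * u) * u⁻¹ = Equiv.swap a0 b0 :=
      mul_inv_cancel_right _ _
    have hsatc : BSatChain (u :: (Equiv.swap a0 b0 * u) :: c0t) u v := by
      refine ⟨?_, rfl, ?_⟩
      · rw [List.Chain', List.isChain_cons_cons]
        exact ⟨cov_iff_step.2 hstep0, hc0sat.1⟩
      · rw [List.getLast?_cons_cons]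
        exact hc0sat.2.2
    have hmin_pairs : ∀ e f : Fin n, e < f → BruhatStep u (Equiv.swap e f * u) →
        BruhatLE (Equiv.swap e f * u) v → a0.1 * n + b0.1 ≤ e.1 * n + f.1 := by
      intro e f hef hstepe hlev
      exact hp0min (e, f) (Finset.mem_filter.mpr ⟨Finset.mem_univ _, hef, hstepe, hlev⟩)
    -- ascent of the greedy chain
    have hascc : List.Chain' transLE (blabels (u :: (Equiv.swap a0 b0 * u) :: c0t)) := by
      rw [blabels_cons, hlab0]
      cases c0t with
      | nil => exact List.isChain_singleton _
      | cons w1 t' =>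
        obtain ⟨-, hstepw1, hsatw1⟩ := bsat_cons_elim hc0sat
        obtain ⟨c1, d1, hc1d1, hpq1, hm1, hw1⟩ := step_char.1 hstepw1
        subst hw1
        have hc1d1' : c1.1 < d1.1 := hc1d1
        have hlab1 : (Equiv.swap c1 d1 * (Equiv.swap a0 b0 * u)) *
            (Equiv.swap a0 b0 * u)⁻¹ = Equiv.swap c1 d1 := mul_inv_cancel_right _ _
        rw [blabels_cons, hlab1, List.Chain', List.isChain_cons_cons]
        constructor
        · right
          by_cases hcc : c1.1 < a0.1 ∨ (c1 = a0 ∧ d1.1 < b0.1)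
          · exfalso
            obtain ⟨e, f, hef, hless, hstepef, hlevf⟩ := lemV u v a0 b0 c1 d1
              ha0b0 hc1d1 hstep0 hstepw1 (le_of_bsat hsatw1) hcc
            have hgl := hmin_pairs e f hef hstepef hlevf
            have hkey := key_lemma hgl b0.isLt f.isLt
            rcases hless with h1 | ⟨rfl, h2⟩
            · omega
            · omega
          · by_cases hcc2 : c1.1 = a0.1 ∧ d1.1 = b0.1
            · exfalso
              have hc1 : c1 = a0 := Fin.val_injective hcc2.1
              have hd1 : d1 = b0 := Fin.val_injective hcc2.2
              subst hc1; subst hd1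
              have h1 := hstepw1.2
              rw [← mul_assoc, Equiv.swap_mul_self, one_mul] at h1
              omega
            · have hcc' : ¬(c1.1 < a0.1 ∨ (c1.1 = a0.1 ∧ d1.1 < b0.1)) := by
                intro hx
                apply hcc
                rcases hx with hx | ⟨hx1, hx2⟩
                · exact Or.inl hx
                · exact Or.inr ⟨Fin.val_injective hx1, hx2⟩
              have hval : a0.1 < c1.1 ∨ (a0.1 = c1.1 ∧ b0.1 < d1.1) := by omega
              rw [transLT_iff ha0b0 hc1d1]
              rcases hval with hx | ⟨hx1, hx2⟩
              · exact Or.inl (flt hx)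
              · exact Or.inr ⟨Fin.val_injective hx1, flt hx2⟩
        · have h2 := hc0asc
          rw [blabels_cons, hlab1] at h2
          exact h2
    refine ⟨u :: (Equiv.swap a0 b0 * u) :: c0t, ⟨hsatc, hascc⟩, ?_, ?_⟩
    · -- uniqueness
      intro c' hsat' hasc'
      obtain ⟨y, l, rfl⟩ := bsat_shape hsat' hne
      obtain ⟨-, hstepy, hsaty⟩ := bsat_cons_elim hsat'
      obtain ⟨a1, b1, ha1b1, hpqy, hmy, hy⟩ := step_char.1 hstepy
      subst hy
      have ha1b1' : a1.1 < b1.1 := ha1b1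
      have hU := lemU (m + 1) u v (by omega) a1 b1 l ha1b1 hstepy hsaty hasc'
        a0 b0 ha0b0 hstep0 h0v
      have hgl := hmin_pairs a1 b1 ha1b1 hstepy (le_of_bsat hsaty)
      have hkey := key_lemma hgl b0.isLt b1.isLt
      have hval : a1.1 = a0.1 ∧ b1.1 = b0.1 := by
        rcases hU with ⟨h1, h2⟩ | h1 | ⟨h1, h2⟩
        · exact ⟨h1.symm, h2.symm⟩
        · omega
        · have := congrArg Fin.val h1; omega
      have ha1 : a1 = a0 := Fin.val_injective hval.1
      have hb1 : b1 = b0 := Fin.val_injective hval.2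
      subst ha1; subst hb1
      have htaileq : (Equiv.swap a1 b1 * u) :: l =
          (Equiv.swap a1 b1 * u) :: c0t := by
        apply hc0uniq _ hsaty
        have h2 := hasc'
        rw [blabels_cons] at h2
        exact h2.tail
      rw [List.cons.injEq] at htaileq
      rw [htaileq.2]
    · -- lex minimality
      intro c' hsat' hnec
      obtain ⟨y, l, rfl⟩ := bsat_shape hsat' hne
      obtain ⟨-, hstepy, hsaty⟩ := bsat_cons_elim hsat'
      obtain ⟨a1, b1, ha1b1, hpqy, hmy, hy⟩ := step_char.1 hstepy
      subst hy
      have ha1b1' : a1.1 < b1.1 := ha1b1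
      have hlab1 : (Equiv.swap a1 b1 * u) * u⁻¹ = Equiv.swap a1 b1 :=
        mul_inv_cancel_right _ _
      rw [blabels_cons, blabels_cons, hlab0, hlab1]
      by_cases hsame : a1.1 = a0.1 ∧ b1.1 = b0.1
      · have ha1 : a1 = a0 := Fin.val_injective hsame.1
        have hb1 : b1 = b0 := Fin.val_injective hsame.2
        subst ha1; subst hb1
        have hltail : ((Equiv.swap a1 b1 * u) :: l) ≠ ((Equiv.swap a1 b1 * u) :: c0t) := by
          intro hx
          apply hnec
          rw [List.cons.injEq] at hx
          rw [hx.2]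
        have hlex := hc0lex _ hsaty hltail
        exact List.Lex.cons hlex
      · apply List.Lex.rel
        have hgl := hmin_pairs a1 b1 ha1b1 hstepy (le_of_bsat hsaty)
        have hkey := key_lemma hgl b0.isLt b1.isLt
        have hval : a0.1 < a1.1 ∨ (a0.1 = a1.1 ∧ b0.1 < b1.1) := by omega
        rw [transLT_iff ha0b0 ha1b1]
        rcases hval with hx | ⟨hx1, hx2⟩
        · exact Or.inl (flt hx)
        · exact Or.inr ⟨Fin.val_injective hx1, flt hx2⟩

end BEL

/-- Dyer's EL-labeling of Bruhat order: for `u ≤ v`, there is exactly one saturated chain from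
`u` to `v` with weakly ascending labels, and its label sequence is lexicographically strictly
smaller than that of every other saturated chain from `u` to `v`. -/
theorem bruhat_EL_shelling (n : ℕ) (u v : Equiv.Perm (Fin n)) (h : BruhatLE u v) :
    (∃! c : List (Equiv.Perm (Fin n)), BSatChain c u v ∧ List.Chain' transLE (blabels c)) ∧
    (∀ c c' : List (Equiv.Perm (Fin n)), BSatChain c u v → List.Chain' transLE (blabels c) →
      BSatChain c' u v → c' ≠ c → List.Lex transLT (blabels c) (blabels c')) := by
  obtain ⟨c, ⟨hsat, hasc⟩, huniq, hlex⟩ :=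
    BEL.master (numInv v) u v h (by omega)
  constructor
  · exact ⟨c, ⟨hsat, hasc⟩, fun c' hc' => huniq c' hc'.1 hc'.2⟩
  · intro ca c' hca hascca hc' hnec
    have hceq : ca = c := huniq ca hca hascca
    subst hceq
    exact hlex c' hc' hnec
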